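/- The center of the braid group B_n (n ≥ 3) is the infinite cyclic group generated by δ², where δ = σ_1(σ_2σ_1)(σ_3σ_2σ_1)⋯(σ_{n−1}⋯σ_1) in terms of the standard Artin generators σ_i. -/

import Mathlib

namespace Braid12

variable {m : ℕ}

abbrev W (m : ℕ) := List (Fin m)

def Far (a b : Fin m) : Prop := (a:ℕ)+2 ≤ b ∨ (b:ℕ)+2 ≤ a

def Adj (a b : Fin m) : Prop := (b:ℕ) = a+1 ∨ (a:ℕ) = b+1

lemma Far.symm {a b : Fin m} (h : Far a b) : Far b a := Or.symm h
lemma Adj.symm {a b : Fin m} (h : Adj a b) : Adj b a := Or.symm h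

inductive Step : W m → W m → Prop
  | far (x y : W m) (a b : Fin m) (h : Far a b) : Step (x++a::b::y) (x++b::a::y)
  | braid (x y : W m) (a b : Fin m) (h : (b:ℕ) = a+1) : Step (x++a::b::a::y) (x++b::a::b::y)
  | braid' (x y : W m) (a b : Fin m) (h : (b:ℕ) = a+1) : Step (x++b::a::b::y) (x++a::b::a::y)

def Eqv : W m → W m → Prop := Relation.ReflTransGen Step

lemma Step.symm {u v : W m} (h : Step u v) : Step v u := by
  cases h with
  | far x y a b h => exact Step.far x y b a h.symm
  | braid x y a b h => exact Step.braid' x y a b h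
  | braid' x y a b h => exact Step.braid x y a b h

lemma Eqv.rfl {u : W m} : Eqv u u := Relation.ReflTransGen.refl

lemma Eqv.trans {u v w : W m} (h : Eqv u v) (h' : Eqv v w) : Eqv u w :=
  Relation.ReflTransGen.trans h h'

lemma Eqv.symm {u v : W m} (h : Eqv u v) : Eqv v u := by
  induction h with
  | refl => exact Eqv.rfl
  | tail _ h2 ih => exact Eqv.trans (Relation.ReflTransGen.single h2.symm) ih

lemma Step.eqv {u v : W m} (h : Step u v) : Eqv u v := Relation.ReflTransGen.single h

lemma Step.len {u v : W m} (h : Step u v) : u.length = v.length := by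
  cases h <;> simp

lemma Eqv.len {u v : W m} (h : Eqv u v) : u.length = v.length := by
  induction h with
  | refl => rfl
  | tail _ h2 ih => exact ih.trans h2.len

lemma Step.append_left (w : W m) {u v : W m} (h : Step u v) : Step (w ++ u) (w ++ v) := by
  cases h with
  | far x y a b h => rw [← List.append_assoc, ← List.append_assoc]; exact Step.far (w++x) y a b h
  | braid x y a b h => rw [← List.append_assoc, ← List.append_assoc]; exact Step.braid (w++x) y a b h
  | braid' x y a b h => rw [← List.append_assoc, ← List.append_assoc]; exact Step.braid' (w++x) y a b h

lemma Step.append_right (w : W m) {u v : W m} (h : Step u v) : Step (u ++ w) (v ++ w) := by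
  cases h with
  | far x y a b h => simpa [List.append_assoc] using Step.far x (y ++ w) a b h
  | braid x y a b h => simpa [List.append_assoc] using Step.braid x (y ++ w) a b h
  | braid' x y a b h => simpa [List.append_assoc] using Step.braid' x (y ++ w) a b h

lemma Eqv.append_left (w : W m) {u v : W m} (h : Eqv u v) : Eqv (w ++ u) (w ++ v) :=
  Relation.ReflTransGen.lift (fun x => w ++ x) (fun _ _ h => Step.append_left w h) _ _ h

lemma Eqv.append_right (w : W m) {u v : W m} (h : Eqv u v) : Eqv (u ++ w) (v ++ w) :=
  Relation.ReflTransGen.lift (fun x => x ++ w) (fun _ _ h => Step.append_right w h) _ _ h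

lemma Eqv.append {u v u' v' : W m} (h : Eqv u u') (h' : Eqv v v') :
    Eqv (u ++ v) (u' ++ v') :=
  (Eqv.append_right v h).trans (Eqv.append_left u' h')

lemma Eqv.cons (c : Fin m) {u v : W m} (h : Eqv u v) : Eqv (c :: u) (c :: v) :=
  Eqv.append_left [c] h

lemma swapE {a b : Fin m} (h : Far a b) (t : W m) : Eqv (a::b::t) (b::a::t) :=
  (Step.far [] t a b h).eqv

lemma braidE {a b : Fin m} (h : Adj a b) (t : W m) : Eqv (a::b::a::t) (b::a::b::t) := by
  cases h with
  | inl h => exact (Step.braid [] t a b h).eqv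
  | inr h => exact (Step.braid' [] t b a h).eqv

/-! ### trichotomy -/

lemma far_irrefl {a : Fin m} (h : Far a a) : False := by unfold Far at h; omega
lemma adj_irrefl {a : Fin m} (h : Adj a a) : False := by unfold Adj at h; omega
lemma far_adj {a b : Fin m} (h : Far a b) (h' : Adj a b) : False := by
  unfold Far at h; unfold Adj at h'; omega

lemma trichotomy (a b : Fin m) : a = b ∨ Far a b ∨ Adj a b := by
  rcases eq_or_ne a b with h | h
  · exact Or.inl h
  · right
    have hne : (a:ℕ) ≠ (b:ℕ) := fun hh => h (Fin.ext hh)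
    unfold Far Adj
    omega

/-! ### the conclusion predicate -/

def Conc (a b : Fin m) (U V : W m) : Prop :=
  (a = b → Eqv U V) ∧
  (Far a b → ∃ t, Eqv U (b::t) ∧ Eqv V (a::t)) ∧
  (Adj a b → ∃ t, Eqv U (b::a::t) ∧ Eqv V (a::b::t))

lemma conc_of_eq {a b : Fin m} {U V : W m} (hab : a = b) (h : Eqv U V) : Conc a b U V := by
  subst hab
  exact ⟨fun _ => h, fun hf => absurd hf far_irrefl, fun ha => absurd ha adj_irrefl⟩

lemma conc_of_far {a b : Fin m} {U V : W m} (hab : Far a b) {t : W m}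
    (h1 : Eqv U (b::t)) (h2 : Eqv V (a::t)) : Conc a b U V := by
  refine ⟨fun he => absurd (he ▸ hab) far_irrefl, fun _ => ⟨t, h1, h2⟩,
    fun ha => absurd ha (fun ha => far_adj hab ha)⟩

lemma conc_of_adj {a b : Fin m} {U V : W m} (hab : Adj a b) {t : W m}
    (h1 : Eqv U (b::a::t)) (h2 : Eqv V (a::b::t)) : Conc a b U V := by
  refine ⟨fun he => absurd (he ▸ hab) adj_irrefl, fun hf => absurd hab (fun ha => far_adj hf ha),
    fun _ => ⟨t, h1, h2⟩⟩

lemma Conc.transfer {a b : Fin m} {U U' V : W m} (h : Eqv U U') (hC : Conc a b U' V) :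
    Conc a b U V := by
  obtain ⟨h1, h2, h3⟩ := hC
  refine ⟨fun he => h.trans (h1 he), fun hf => ?_, fun ha => ?_⟩
  · obtain ⟨t, hu, hv⟩ := h2 hf; exact ⟨t, h.trans hu, hv⟩
  · obtain ⟨t, hu, hv⟩ := h3 ha; exact ⟨t, h.trans hu, hv⟩


section Combine

variable {N : ℕ}

/-- Combination lemma, case where the head-switch was a far move. -/
lemma combineF
    (ih : ∀ (U : W m) (a b : Fin m) (V : W m), U.length ≤ N → Eqv (a::U) (b::V) → Conc a b U V)
    {a c bb : Fin m} {W₀ V : W m} (hac : Far a c) (hlen : W₀.length ≤ N)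
    (hC : Conc c bb (a::W₀) V) : Conc a bb (c::W₀) V := by
  rcases trichotomy c bb with hcb | hcb | hcb
  · subst hcb
    have hV : Eqv (a::W₀) V := hC.1 rfl
    exact conc_of_far hac Eqv.rfl hV.symm
  · -- Far c bb
    obtain ⟨t₁, h1, h2⟩ := hC.2.1 hcb
    have hc1 := ih W₀ a bb t₁ hlen h1
    rcases trichotomy a bb with hab | hab | hab
    · subst hab
      have h3 : Eqv W₀ t₁ := hc1.1 rfl
      exact conc_of_eq rfl ((h3.cons c).trans h2.symm)
    · obtain ⟨t₂, h3, h4⟩ := hc1.2.1 hab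
      refine conc_of_far hab (t := c::t₂) ?_ ?_
      · exact (h3.cons c).trans (swapE hcb t₂)
      · exact h2.trans ((h4.cons c).trans (swapE hac.symm t₂))
    · obtain ⟨t₂, h3, h4⟩ := hc1.2.2 hab
      refine conc_of_adj hab (t := c::t₂) ?_ ?_
      · exact (h3.cons c).trans ((swapE hcb (a::t₂)).trans ((swapE hac.symm t₂).cons bb))
      · exact h2.trans ((h4.cons c).trans ((swapE hac.symm (bb::t₂)).trans ((swapE hcb t₂).cons a)))
  · -- Adj c bb
    obtain ⟨t₁, h1, h2⟩ := hC.2.2 hcb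
    have hc1 := ih W₀ a bb (c::t₁) hlen h1
    rcases trichotomy a bb with hab | hab | hab
    · exfalso; subst hab; exact far_adj hac hcb.symm
    · -- Far a bb
      obtain ⟨t₂, h3, h4⟩ := hc1.2.1 hab
      have hlt : t₁.length ≤ N := by
        have e1 := h1.len; have e2 := h4.len
        simp only [List.length_cons] at e1 e2
        omega
      have hc2 := ih t₁ c a t₂ hlt h4
      obtain ⟨t₃, h5, h6⟩ := hc2.2.1 hac.symm
      refine conc_of_far hab (t := c::bb::t₃) ?_ ?_
      · exact (h3.cons c).trans (((h6.cons bb).cons c).trans (braidE hcb t₃))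
      · exact h2.trans (((h5.cons bb).cons c).trans
          (((swapE hab.symm t₃).cons c).trans (swapE hac.symm (bb::t₃))))
    · -- Adj a bb
      obtain ⟨t₂, h3, h4⟩ := hc1.2.2 hab
      have hlt : t₁.length ≤ N := by
        have e1 := h1.len; have e2 := h4.len
        simp only [List.length_cons] at e1 e2
        omega
      have hc2 := ih t₁ c a (bb::t₂) hlt h4
      obtain ⟨t₃, h5, h6⟩ := hc2.2.1 hac.symm
      have hlt2 : t₂.length ≤ N := by
        have e1 := h1.len; have e2 := h4.len
        simp only [List.length_cons] at e1 e2
        omega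
      have hc3 := ih t₂ bb c t₃ hlt2 h6
      obtain ⟨t₄, h7, h8⟩ := hc3.2.2 hcb.symm
      refine conc_of_adj hab (t := c::bb::a::t₄) ?_ ?_
      · -- U-side: c::W₀ ≈ ... ≈ bb::a::c::bb::a::t₄
        refine (h3.cons c).trans ((((h7.cons a).cons bb).cons c).trans ?_)
        -- [c,bb,a,c,bb]++t₄
        refine (((swapE hac (bb::t₄)).cons bb).cons c).trans ?_
        -- [c,bb,c,a,bb]
        refine (braidE hcb (a::bb::t₄)).trans ?_
        -- [bb,c,bb,a,bb]
        refine (((braidE hab.symm t₄).cons c).cons bb).trans ?_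
        -- [bb,c,a,bb,a]
        exact (swapE hac.symm (bb::a::t₄)).cons bb
        -- [bb,a,c,bb,a]
      · -- V-side
        refine h2.trans (((h5.cons bb).cons c).trans ?_)
        refine ((((h8.cons a).cons bb).cons c)).trans ?_
        -- [c,bb,a,bb,c]
        refine ((braidE hab.symm (c::t₄)).cons c).trans ?_
        -- [c,a,bb,a,c]
        refine (swapE hac.symm (bb::a::c::t₄)).trans ?_
        -- [a,c,bb,a,c]
        refine ((((swapE hac t₄).cons bb).cons c).cons a).trans ?_
        -- [a,c,bb,c,a]
        exact (braidE hcb (a::t₄)).cons a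
        -- [a,bb,c,bb,a]

/-- Combination lemma, case where the head-switch was a braid move. -/
lemma combineA
    (ih : ∀ (U : W m) (a b : Fin m) (V : W m), U.length ≤ N → Eqv (a::U) (b::V) → Conc a b U V)
    {a c bb : Fin m} {W₀ V : W m} (hac : Adj a c) (hlen : W₀.length + 1 ≤ N)
    (hC : Conc c bb (a::c::W₀) V) : Conc a bb (c::a::W₀) V := by
  rcases trichotomy c bb with hcb | hcb | hcb
  · subst hcb
    have hV : Eqv (a::c::W₀) V := hC.1 rfl
    exact conc_of_adj hac Eqv.rfl hV.symm
  · -- Far c bb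
    obtain ⟨t₁, h1, h2⟩ := hC.2.1 hcb
    have hc1 := ih (c::W₀) a bb t₁ (by simpa using hlen) h1
    rcases trichotomy a bb with hab | hab | hab
    · exfalso; subst hab; exact far_adj hcb hac.symm
    · -- Far a bb
      obtain ⟨t₂, h3, h4⟩ := hc1.2.1 hab
      have hc2 := ih W₀ c bb t₂ (by omega) h3
      obtain ⟨t₃, h5, h6⟩ := hc2.2.1 hcb
      refine conc_of_far hab (t := c::a::t₃) ?_ ?_
      · exact ((h5.cons a).cons c).trans (((swapE hab t₃).cons c).trans (swapE hcb (a::t₃)))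
      · exact h2.trans ((h4.cons c).trans (((h6.cons a).cons c).trans (braidE hac.symm t₃)))
    · -- Adj a bb  (Adj a c, Far c bb, Adj a bb)
      obtain ⟨t₂, h3, h4⟩ := hc1.2.2 hab
      have hc2 := ih W₀ c bb (a::t₂) (by omega) h3
      obtain ⟨t₃, h5, h6⟩ := hc2.2.1 hcb
      have hl3 : t₂.length ≤ N := by
        have e1 := h3.len; simp only [List.length_cons] at e1; omega
      have hc3 := ih t₂ a c t₃ hl3 h6
      obtain ⟨t₄, h7, h8⟩ := hc3.2.2 hac
      refine conc_of_adj hab (t := c::a::bb::t₄) ?_ ?_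
      · -- U: c::a::W₀ ≈ c::a::bb::t₃ ≈ [c,a,bb,a,c]++t₄ → bb::a::(c::a::bb::t₄)
        refine (((h5.cons a).cons c).trans (((h8.cons bb).cons a).cons c)).trans ?_
        refine ((braidE hab (c::t₄)).cons c).trans ?_
        -- [c,bb,a,bb,c]
        refine (swapE hcb (a::bb::c::t₄)).trans ?_
        -- [bb,c,a,bb,c]
        refine ((((swapE hcb.symm t₄).cons a).cons c).cons bb).trans ?_
        -- [bb,c,a,c,bb]
        exact (braidE hac.symm (bb::t₄)).cons bb
        -- [bb,a,c,a,bb]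
      · -- V: ≈ c::a::bb::t₂ ≈ [c,a,bb,c,a]++t₄ → a::bb::(c::a::bb::t₄)
        refine (h2.trans ((h4.cons c).trans (((h7.cons bb).cons a).cons c))).trans ?_
        refine (((swapE hcb.symm (a::t₄)).cons a).cons c).trans ?_
        -- [c,a,c,bb,a]
        refine (braidE hac.symm (bb::a::t₄)).trans ?_
        -- [a,c,a,bb,a]
        refine (((braidE hab t₄).cons c).cons a).trans ?_
        -- [a,c,bb,a,bb]
        exact (swapE hcb (a::bb::t₄)).cons a
        -- [a,bb,c,a,bb]
  · -- Adj c bb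
    obtain ⟨t₁, h1, h2⟩ := hC.2.2 hcb
    have hc1 := ih (c::W₀) a bb (c::t₁) (by simpa using hlen) h1
    rcases trichotomy a bb with hab | hab | hab
    · subst hab
      have h3 : Eqv (c::W₀) (c::t₁) := hc1.1 rfl
      have h4 : Eqv W₀ t₁ := (ih W₀ c c t₁ (by omega) h3).1 rfl
      exact conc_of_eq rfl (((h4.cons a).cons c).trans h2.symm)
    · -- Far a bb  (Adj a c, Adj c bb, Far a bb)
      obtain ⟨t₂, h3, h4⟩ := hc1.2.1 hab
      have hc2 := ih W₀ c bb t₂ (by omega) h3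
      obtain ⟨t₃, h5, h6⟩ := hc2.2.2 hcb
      have hl4 : t₁.length ≤ N := by
        have e1 := h4.len; have e2 := h3.len
        simp only [List.length_cons] at e1 e2; omega
      have hc3 := ih t₁ c a t₂ hl4 h4
      obtain ⟨t₄, h7, h8⟩ := hc3.2.2 hac.symm
      have h9 : Eqv (c::(bb::t₃)) (c::(a::t₄)) := h6.symm.trans h8
      have hl5 : (bb::t₃).length ≤ N := by
        have e2 := h3.len; have e3 := h6.len
        simp only [List.length_cons] at e2 e3 ⊢; omega
      have h10 : Eqv (bb::t₃) (a::t₄) := (ih (bb::t₃) c c (a::t₄) hl5 h9).1 rfl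
      have hl6 : t₃.length ≤ N := by
        simp only [List.length_cons] at hl5; omega
      have hc4 := ih t₃ bb a t₄ hl6 h10
      obtain ⟨t₅, h11, h12⟩ := hc4.2.1 hab.symm
      refine conc_of_far hab (t := c::bb::a::c::t₅) ?_ ?_
      · -- U = c::a::W₀ ≈ c::a::bb::c::t₃ ≈ [c,a,bb,c,a]++t₅ → bb::(c::bb::a::c::t₅)
        refine (((h5.cons a).cons c).trans ((((h11.cons c).cons bb).cons a).cons c)).trans ?_
        refine ((swapE hab (c::a::t₅)).cons c).trans ?_
        -- [c,bb,a,c,a]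
        refine (((braidE hac t₅).cons bb).cons c).trans ?_
        -- [c,bb,c,a,c]
        exact braidE hcb (a::c::t₅)
        -- [bb,c,bb,a,c]
      · -- V ≈ c::bb::t₁ ≈ c::bb::a::c::t₄ ≈ [c,bb,a,c,bb]++t₅ → a::(c::bb::a::c::t₅)
        refine (h2.trans (((h7.cons bb).cons c).trans ((((h12.cons c).cons a).cons bb).cons c))).trans ?_
        refine ((swapE hab.symm (c::bb::t₅)).cons c).trans ?_
        -- [c,a,bb,c,bb]
        refine (((braidE hcb.symm t₅).cons a).cons c).trans ?_
        -- [c,a,c,bb,c]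
        refine (braidE hac.symm (bb::c::t₅)).trans ?_
        -- [a,c,a,bb,c]
        exact ((swapE hab (c::t₅)).cons c).cons a
        -- [a,c,bb,a,c]
    · -- Adj a bb with Adj a c, Adj c bb: impossible
      exfalso
      unfold Adj at hac hcb hab
      omega

end Combine


/-! ### the head lemma -/

lemma step_two_le {u v : W m} (h : Step u v) : 2 ≤ u.length := by
  cases h <;> simp <;> omega

lemma eqv_singleton {a : Fin m} {Z : W m} (h : Eqv [a] Z) : Z = [a] := by
  rcases Relation.ReflTransGen.cases_head h with h | ⟨c, hs, _⟩
  · exact h.symm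
  · have := step_two_le hs; simp at this

theorem key : ∀ (N : ℕ) (U : W m) (a b : Fin m) (V : W m),
    U.length ≤ N → Eqv (a::U) (b::V) → Conc a b U V := by
  intro N
  induction N with
  | zero =>
    intro U a b V hlen h
    have hU : U = [] := List.length_eq_zero_iff.mp (Nat.le_zero.mp hlen)
    subst hU
    have h2 := eqv_singleton h
    simp only [List.cons.injEq] at h2
    obtain ⟨hb, hV⟩ := h2
    subst hb; subst hV
    exact conc_of_eq rfl Eqv.rfl
  | succ N ihN =>
    intro U₀ a₀ b V₀ hlen₀ h₀
    suffices H : ∀ (X : W m) (hX : Eqv X (b::V₀)), ∀ a U, X = a::U → U.length ≤ N+1 →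
        Conc a b U V₀ by
      exact H _ h₀ a₀ U₀ rfl hlen₀
    intro X hX
    induction hX using Relation.ReflTransGen.head_induction_on with
    | refl =>
      intro a U hU hl
      simp only [List.cons.injEq] at hU
      obtain ⟨hb, hV⟩ := hU
      subst hb; subst hV
      exact conc_of_eq rfl Eqv.rfl
    | head hs hchain ih =>
      intro a U hU hl
      cases hs with
      | far x y a' b' hfar =>
        cases x with
        | nil =>
          simp only [List.nil_append, List.cons.injEq] at hU
          obtain ⟨ha, hU⟩ := hU
          subst ha; subst hU
          have hcc := ih b' (a'::y) (by simp) (by simp only [List.length_cons] at hl ⊢; omega)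
          refine combineF ihN hfar ?_ hcc
          · simp only [List.length_cons] at hl; omega
        | cons c0 x =>
          simp only [List.cons_append, List.cons.injEq] at hU
          obtain ⟨ha, hU⟩ := hU
          subst ha; subst hU
          have hlen' : (x ++ b'::a'::y).length ≤ N+1 := by
            simp only [List.length_append, List.length_cons] at hl ⊢; omega
          have hcc := ih c0 (x ++ b'::a'::y) rfl hlen'
          exact Conc.transfer (Step.far x y a' b' hfar).eqv hcc
      | braid x y a' b' hb' =>
        cases x with
        | nil =>
          simp only [List.nil_append, List.cons.injEq] at hU
          obtain ⟨ha, hU⟩ := hU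
          subst ha; subst hU
          have hcc := ih b' (a'::b'::y) (by simp) (by simp only [List.length_cons] at hl ⊢; omega)
          refine combineA ihN (Or.inl hb') ?_ hcc
          · simp only [List.length_cons] at hl; omega
        | cons c0 x =>
          simp only [List.cons_append, List.cons.injEq] at hU
          obtain ⟨ha, hU⟩ := hU
          subst ha; subst hU
          have hlen' : (x ++ b'::a'::b'::y).length ≤ N+1 := by
            simp only [List.length_append, List.length_cons] at hl ⊢; omega
          have hcc := ih c0 (x ++ b'::a'::b'::y) rfl hlen'
          exact Conc.transfer (Step.braid x y a' b' hb').eqv hcc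
      | braid' x y a' b' hb' =>
        cases x with
        | nil =>
          simp only [List.nil_append, List.cons.injEq] at hU
          obtain ⟨ha, hU⟩ := hU
          subst ha; subst hU
          have hcc := ih a' (b'::a'::y) (by simp) (by simp only [List.length_cons] at hl ⊢; omega)
          refine combineA ihN (Or.inr hb') ?_ hcc
          · simp only [List.length_cons] at hl; omega
        | cons c0 x =>
          simp only [List.cons_append, List.cons.injEq] at hU
          obtain ⟨ha, hU⟩ := hU
          subst ha; subst hU
          have hlen' : (x ++ a'::b'::a'::y).length ≤ N+1 := by
            simp only [List.length_append, List.length_cons] at hl ⊢; omega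
          have hcc := ih c0 (x ++ a'::b'::a'::y) rfl hlen'
          exact Conc.transfer (Step.braid' x y a' b' hb').eqv hcc

/-! ### corollaries of the head lemma -/

theorem headE {a b : Fin m} {U V : W m} (h : Eqv (a::U) (b::V)) : Conc a b U V :=
  key U.length U a b V le_rfl h

lemma cancel_head {a : Fin m} {U V : W m} (h : Eqv (a::U) (a::V)) : Eqv U V :=
  (headE h).1 rfl

lemma cancel_left : ∀ (u : W m) {v w : W m}, Eqv (u++v) (u++w) → Eqv v w := by
  intro u
  induction u with
  | nil => intro v w h; simpa using h
  | cons c u ih => intro v w h; exact ih (cancel_head h)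

/-! ### the words `wDes`, `wAsc`, `wDelta` -/

def wDes : (k : ℕ) → k ≤ m → W m
  | 0, _ => []
  | (k+1), h => ⟨k, h⟩ :: wDes k (Nat.le_of_succ_le h)

def wAsc : (k : ℕ) → k ≤ m → W m
  | 0, _ => []
  | (k+1), h => wAsc k (Nat.le_of_succ_le h) ++ [⟨k, h⟩]

def wDelta : (k : ℕ) → k ≤ m → W m
  | 0, _ => []
  | (k+1), h => wDelta k (Nat.le_of_succ_le h) ++ wDes (k+1) h

lemma mem_wDes {k : ℕ} (h : k ≤ m) {x : Fin m} (hx : x ∈ wDes k h) : (x:ℕ) < k := by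
  induction k with
  | zero => simp [wDes] at hx
  | succ k ih =>
    simp only [wDes, List.mem_cons] at hx
    rcases hx with hx | hx
    · simp [hx]
    · exact Nat.lt_succ_of_lt (ih _ hx)

lemma mem_wAsc {k : ℕ} (h : k ≤ m) {x : Fin m} (hx : x ∈ wAsc k h) : (x:ℕ) < k := by
  induction k with
  | zero => simp [wAsc] at hx
  | succ k ih =>
    simp only [wAsc, List.mem_append, List.mem_singleton] at hx
    rcases hx with hx | hx
    · exact Nat.lt_succ_of_lt (ih _ hx)
    · simp [hx]

lemma mem_wDelta {k : ℕ} (h : k ≤ m) {x : Fin m} (hx : x ∈ wDelta k h) : (x:ℕ) < k := by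
  induction k with
  | zero => simp [wDelta] at hx
  | succ k ih =>
    simp only [wDelta, List.mem_append] at hx
    rcases hx with hx | hx
    · exact Nat.lt_succ_of_lt (ih _ hx)
    · exact mem_wDes _ hx

lemma far_pass {c : Fin m} : ∀ (u : W m), (∀ x ∈ u, Far c x) → ∀ (v : W m),
    Eqv (c::(u++v)) (u++(c::v)) := by
  intro u
  induction u with
  | nil => intro _ v; exact Eqv.rfl
  | cons d u ih =>
    intro hu v
    have h1 : Eqv (c::d::(u++v)) (d::c::(u++v)) := swapE (hu d (by simp)) _
    exact h1.trans ((ih (fun x hx => hu x (by simp [hx])) v).cons d)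

/-- `σ_i ⬝ D_k ≈ D_k ⬝ σ_{i+1}` for `i+1 ≤ k` (`D_k = wDes (k+1)`). -/
lemma L1 : ∀ (k i : ℕ) (hik : i+1 ≤ k) (hk : k+1 ≤ m),
    Eqv ((⟨i, by omega⟩ : Fin m) :: wDes (k+1) hk)
      (wDes (k+1) hk ++ [(⟨i+1, by omega⟩ : Fin m)]) := by
  intro k
  induction k with
  | zero => intro i hik; omega
  | succ k ih =>
    intro i hik hk
    rcases Nat.lt_or_ge (i+1) (k+1) with hlt | hge
    · -- i+1 ≤ k : swap past the top letter σ_{k+1}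
      have hfar : Far (⟨i, by omega⟩ : Fin m) ⟨k+1, hk⟩ := by
        unfold Far; simp; omega
      have h1 : Eqv ((⟨i, by omega⟩ : Fin m) :: wDes (k+2) hk)
          ((⟨k+1, hk⟩ : Fin m) :: (⟨i, by omega⟩ : Fin m) :: wDes (k+1) (by omega)) :=
        swapE hfar _
      refine h1.trans ?_
      exact (ih i (by omega) (by omega)).cons _
    · -- i = k : braid at the top
      have hik' : i = k := by omega
      subst hik'
      -- wDes (i+2) = σ_{i+1} :: σ_i :: wDes i
      show Eqv ((⟨i, _⟩ : Fin m) :: (⟨i+1, hk⟩ : Fin m) :: (⟨i, _⟩ : Fin m) :: wDes i (by omega))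
        (((⟨i+1, hk⟩ : Fin m) :: (⟨i, _⟩ : Fin m) :: wDes i (by omega)) ++ [(⟨i+1, _⟩ : Fin m)])
      have hadj : Adj (⟨i, by omega⟩ : Fin m) ⟨i+1, hk⟩ := Or.inl rfl
      refine (braidE hadj _).trans ?_
      have hpass : Eqv ((⟨i+1, hk⟩ : Fin m) :: (wDes i (by omega) ++ []))
          (wDes i (by omega) ++ ([(⟨i+1, hk⟩ : Fin m)])) := by
        refine far_pass _ (fun x hx => ?_) []
        have := mem_wDes (m := m) (by omega) hx
        unfold Far; right; simp; omega
      have hpass' : Eqv ((⟨i+1, hk⟩ : Fin m) :: wDes i (by omega))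
          (wDes i (by omega) ++ [(⟨i+1, hk⟩ : Fin m)]) := by
        simpa using hpass
      simpa using ((hpass'.cons _).cons _)

/-- `Δ_{k+1} ≈ A_{k+1} ⬝ Δ_k`. -/
lemma lemB : ∀ (k : ℕ) (hk : k+1 ≤ m),
    Eqv (wDelta (k+1) hk) (wAsc (k+1) hk ++ wDelta k (Nat.le_of_succ_le hk)) := by
  intro k
  induction k with
  | zero => intro hk; simp [wDelta, wDes, wAsc]; exact Eqv.rfl
  | succ k ih =>
    intro hk
    -- wDelta (k+2) = wDelta (k+1) ++ wDes (k+2)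
    have hpass : Eqv ((⟨k+1, hk⟩ : Fin m) :: (wDelta k (by omega) ++ wDes (k+1) (by omega)))
        (wDelta k (by omega) ++ ((⟨k+1, hk⟩ : Fin m) :: wDes (k+1) (by omega))) := by
      refine far_pass _ (fun x hx => ?_) _
      have := mem_wDelta (by omega) hx
      unfold Far; right; simp; omega
    have q1 : (wAsc (k+1) (by omega : k+1 ≤ m) ++ wDelta k (by omega)) ++ wDes (k+2) hk
        = wAsc (k+1) (by omega) ++ (wDelta k (by omega)
            ++ ((⟨k+1, hk⟩ : Fin m) :: wDes (k+1) (by omega))) := by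
      simp [wDes, List.append_assoc]
    have q2 : wAsc (k+2) hk ++ wDelta (k+1) (Nat.le_of_succ_le hk)
        = wAsc (k+1) (by omega) ++ ((⟨k+1, hk⟩ : Fin m)
            :: (wDelta k (by omega) ++ wDes (k+1) (by omega))) := by
      simp [wAsc, wDelta, List.append_assoc]
    have e2 : Eqv ((wAsc (k+1) (by omega) ++ wDelta k (by omega)) ++ wDes (k+2) hk)
        (wAsc (k+2) hk ++ wDelta (k+1) (Nat.le_of_succ_le hk)) := by
      rw [q1, q2]
      exact (Eqv.append_left (wAsc (k+1) (by omega)) hpass).symm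
    exact (((ih (by omega)).append_right (wDes (k+2) hk)).trans e2)


/-- `σ_k ⬝ A_{k+1} ≈ A_{k+1} ⬝ σ_{k-1}` (`A_{k+1} = wAsc (k+2)` with top letter `σ_{k+1}`):
precisely, `σ_{k'+1} ⬝ wAsc (k'+2) ≈ wAsc (k'+2) ⬝ σ_{k'}`. -/
lemma ascL (k : ℕ) (hk : k+2 ≤ m) :
    Eqv ((⟨k+1, by omega⟩ : Fin m) :: wAsc (k+2) hk)
      (wAsc (k+2) hk ++ [(⟨k, by omega⟩ : Fin m)]) := by
  have q1 : wAsc (k+2) hk = wAsc k (by omega) ++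
      [(⟨k, by omega⟩ : Fin m), (⟨k+1, by omega⟩ : Fin m)] := by
    simp [wAsc, List.append_assoc]
  rw [q1]
  have hpass : Eqv ((⟨k+1, by omega⟩ : Fin m) ::
      (wAsc k (by omega) ++ [(⟨k, by omega⟩ : Fin m), (⟨k+1, by omega⟩ : Fin m)]))
      (wAsc k (by omega) ++ ((⟨k+1, by omega⟩ : Fin m) ::
        [(⟨k, by omega⟩ : Fin m), (⟨k+1, by omega⟩ : Fin m)])) := by
    refine far_pass _ (fun x hx => ?_) _
    have := mem_wAsc (m := m) (by omega) hx
    unfold Far; right; simp; omega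
  refine hpass.trans ?_
  have hbr : Eqv ((⟨k+1, by omega⟩ : Fin m) ::
        [(⟨k, by omega⟩ : Fin m), (⟨k+1, by omega⟩ : Fin m)])
      ((⟨k, by omega⟩ : Fin m) ::
        [(⟨k+1, by omega⟩ : Fin m), (⟨k, by omega⟩ : Fin m)]) := by
    have := braidE (a := (⟨k, by omega⟩ : Fin m)) (b := (⟨k+1, by omega⟩ : Fin m))
      (Or.inl (by simp)) []
    exact this.symm
  refine (Eqv.append_left _ hbr).trans ?_
  simp [List.append_assoc]
  exact Eqv.rfl

/-- The key conjugation identity: `σ_i ⬝ Δ_k ≈ Δ_k ⬝ σ_{k-1-i}`. -/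
lemma lemC : ∀ (k : ℕ) (hk : k ≤ m) (i j : ℕ) (hik : i < k) (hj : j + 1 + i = k),
    Eqv ((⟨i, by omega⟩ : Fin m) :: wDelta k hk)
      (wDelta k hk ++ [(⟨j, by omega⟩ : Fin m)]) := by
  intro k
  induction k with
  | zero => intro _ i j h; omega
  | succ k ih =>
    intro hk i j hi hj
    rcases Nat.lt_or_ge i k with hik | hik
    · -- i < k : use IH and L1
      have hj1 : j ≥ 1 := by omega
      have h1 := (ih (by omega) i (j-1) hik (by omega)).append_right (wDes (k+1) hk)
      have h2 := Eqv.append_left (wDelta k (by omega)) (L1 k (j-1) (by omega) hk)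
      have efin : (⟨j-1+1, by omega⟩ : Fin m) = (⟨j, by omega⟩ : Fin m) := by
        apply Fin.ext; simp; omega
      rw [efin] at h2
      have q1 : (wDelta k (by omega : k ≤ m) ++ [(⟨j-1, by omega⟩ : Fin m)]) ++ wDes (k+1) hk
          = wDelta k (by omega) ++ ((⟨j-1, by omega⟩ : Fin m) :: wDes (k+1) hk) := by
        simp [List.append_assoc]
      have q2 : wDelta k (by omega : k ≤ m) ++ (wDes (k+1) hk ++ [(⟨j, by omega⟩ : Fin m)])
          = wDelta (k+1) hk ++ [(⟨j, by omega⟩ : Fin m)] := by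
        simp [wDelta, List.append_assoc]
      rw [q1] at h1
      rw [q2] at h2
      exact h1.trans h2
    · -- i = k
      have hik' : i = k := by omega
      subst hik'
      have hj0 : j = 0 := by omega
      subst hj0
      rcases Nat.eq_zero_or_pos i with hk0 | hk0
      · subst hk0
        show Eqv [(⟨0, by omega⟩ : Fin m), (⟨0, by omega⟩ : Fin m)] _
        exact Eqv.rfl
      · -- i = k ≥ 1
        obtain ⟨k', rfl⟩ : ∃ k', i = k'+1 := ⟨i-1, by omega⟩
        have hB := lemB (k'+1) hk
        have h1 : Eqv ((⟨k'+1, by omega⟩ : Fin m) :: wDelta (k'+2) hk)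
            ((⟨k'+1, by omega⟩ : Fin m) :: (wAsc (k'+2) hk ++ wDelta (k'+1) (by omega))) :=
          hB.cons _
        refine h1.trans ?_
        have h2 := (ascL (m := m) k' (by omega)).append_right (wDelta (k'+1) (by omega))
        refine h2.trans ?_
        have hkm : k' + 1 ≤ m := by omega
        have h3 := Eqv.append_left (wAsc (k'+2) hk) (ih hkm k' 0 (by omega) (by omega))
        have q1 : (wAsc (k'+2) hk ++ [(⟨k', by omega⟩ : Fin m)]) ++ wDelta (k'+1) hkm
            = wAsc (k'+2) hk ++ ((⟨k', by omega⟩ : Fin m) :: wDelta (k'+1) hkm) := by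
          simp [List.append_assoc]
        rw [q1]
        refine h3.trans ?_
        have h4 := (hB.symm).append_right ([(⟨0, by omega⟩ : Fin m)])
        have q2 : wAsc (k'+2) hk ++ (wDelta (k'+1) hkm ++ [(⟨0, by omega⟩ : Fin m)])
            = (wAsc (k'+2) hk ++ wDelta (k'+1) hkm) ++ [(⟨0, by omega⟩ : Fin m)] := by
          simp [List.append_assoc]
        rw [q2]
        exact h4


/-! ### divisibility -/

/-- `u` left-divides `v`. -/
def Dvd (u v : W m) : Prop := ∃ w, Eqv v (u ++ w)

lemma dvd_of_far_head : ∀ (u : W m) {c : Fin m} (_ : ∀ x ∈ u, Far c x) {v z : W m},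
    Eqv (u ++ v) (c :: z) → ∃ z', Eqv v (c :: z') := by
  intro u
  induction u with
  | nil => intro c _ v z h; exact ⟨z, h⟩
  | cons d u ih =>
    intro c hc v z h
    obtain ⟨t, h1, _⟩ := (headE h).2.1 (hc d (by simp)).symm
    exact ih (fun x hx => hc x (by simp [hx])) h1

/-- descending segment `[σ_{j+len-1}, ..., σ_j]` -/
def wSegD (j : ℕ) : (len : ℕ) → j + len ≤ m → W m
  | 0, _ => []
  | (l+1), h => ⟨j+l, h⟩ :: wSegD j l (by omega)

lemma wSegD_zero : ∀ (k : ℕ) (h : k ≤ m), wSegD 0 k (by omega) = wDes k h := by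
  intro k
  induction k with
  | zero => intro h; rfl
  | succ k ih =>
    intro h
    show (⟨0+k, _⟩ : Fin m) :: wSegD 0 k _ = (⟨k, h⟩ : Fin m) :: wDes k _
    rw [ih (by omega)]
    congr 1
    exact Fin.ext (by simp)

lemma wSegD_snoc : ∀ (l j : ℕ) (h : j + (l+1) ≤ m),
    wSegD j (l+1) h = wSegD (j+1) l (by omega) ++ [(⟨j, by omega⟩ : Fin m)] := by
  intro l
  induction l with
  | zero => intro j h; rfl
  | succ l ih =>
    intro j h
    show (⟨j+(l+1), _⟩ : Fin m) :: wSegD j (l+1) _ = ((⟨j+1+l, _⟩ : Fin m) :: wSegD (j+1) l _) ++ _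
    rw [ih j (by omega)]
    simp only [List.cons_append]
    congr 1
    exact Fin.ext (by simp; omega)

lemma lemL : ∀ (len j : ℕ) (_ : 1 ≤ len) (hj : 1 ≤ j) (h : j + len ≤ m) {v z : W m},
    Eqv ((⟨j-1, by omega⟩ : Fin m) :: v) (wSegD j len h ++ z) →
    ∃ w, Eqv v ((wSegD j len h ++ [(⟨j-1, by omega⟩ : Fin m)]) ++ w) := by
  intro len
  induction len with
  | zero => intro j h0; omega
  | succ len ih =>
    intro j _ hj h v z hv
    rcases Nat.eq_zero_or_pos len with h0 | h0
    · -- len = 1 : adjacent head lemma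
      subst h0
      -- wSegD j 1 = [σ_j]
      have hadj : Adj (⟨j-1, by omega⟩ : Fin m) (⟨j+0, h⟩ : Fin m) := by
        unfold Adj; simp; omega
      obtain ⟨t, h1, _⟩ := (headE hv).2.2 hadj
      exact ⟨t, h1⟩
    · -- len ≥ 2 : far head lemma then IH
      have hfar : Far (⟨j-1, by omega⟩ : Fin m) (⟨j+len, h⟩ : Fin m) := by
        unfold Far; simp; omega
      obtain ⟨t, h1, h2⟩ := (headE hv).2.1 hfar
      -- h1 : v ≈ σ_{j+len} :: t,  h2 : wSegD j len ++ z ≈ σ_{j-1} :: t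
      obtain ⟨w, hw⟩ := ih j h0 hj (by omega) h2.symm
      refine ⟨w, h1.trans ?_⟩
      exact hw.cons _

lemma wSegD_congr {j a b : ℕ} (e : a = b) (h : j + a ≤ m) :
    wSegD j a h = wSegD j b (e ▸ h) := by subst e; rfl

lemma chainDvd : ∀ (j l : ℕ) (_ : 1 ≤ l) (h : j + l ≤ m) {y z : W m},
    Eqv (wDes j (by omega) ++ y) (wSegD j l h ++ z) →
    ∃ w, Eqv y (wSegD 0 (j+l) (by omega) ++ w) := by
  intro j
  induction j with
  | zero =>
    intro l _ h y z hyp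
    refine ⟨z, ?_⟩
    simpa [wDes] using hyp
  | succ j ih =>
    intro l hl h y z hyp
    have hyp' : Eqv ((⟨j+1-1, by omega⟩ : Fin m) :: (wDes j (by omega) ++ y))
        (wSegD (j+1) l h ++ z) := by
      have e : (⟨j+1-1, by omega⟩ : Fin m) = (⟨j, by omega⟩ : Fin m) := Fin.ext (by simp)
      rw [e]
      simpa [wDes] using hyp
    obtain ⟨w₁, hw₁⟩ := lemL l (j+1) hl (by omega) h hyp'
    have hsnoc : wSegD (j+1) l (by omega) ++ [(⟨j+1-1, by omega⟩ : Fin m)]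
        = wSegD j (l+1) (by omega) := by
      rw [wSegD_snoc l j (by omega)]
      congr 2
    rw [hsnoc] at hw₁
    obtain ⟨w, hw⟩ := ih (l+1) (by omega) (by omega) hw₁
    refine ⟨w, ?_⟩
    rw [wSegD_congr (show j + (l+1) = (j+1) + l by omega)] at hw
    exact hw

lemma wDes_length : ∀ (k : ℕ) (h : k ≤ m), (wDes k h).length = k := by
  intro k
  induction k with
  | zero => intro h; rfl
  | succ k ih => intro h; simp [wDes, ih]

lemma wDelta_length_pos {k : ℕ} (hk : 1 ≤ k) (h : k ≤ m) : 1 ≤ (wDelta k h).length := by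
  obtain ⟨k', rfl⟩ : ∃ k', k = k'+1 := ⟨k-1, by omega⟩
  show 1 ≤ (wDelta k' _ ++ wDes (k'+1) h).length
  simp [wDes_length]
  omega

/-- If `Δ_k ≼ x` and `σ_k ≼ x` then `Δ_{k+1} ≼ x`. -/
lemma delta_dvd_succ (k : ℕ) (hk : k+1 ≤ m) {x : W m}
    (h1 : Dvd (wDelta k (by omega)) x) (h2 : Dvd [(⟨k, by omega⟩ : Fin m)] x) :
    Dvd (wDelta (k+1) hk) x := by
  obtain ⟨y, hy⟩ := h1
  obtain ⟨z, hz⟩ := h2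
  have hyz : Eqv (wDelta k (by omega) ++ y) ((⟨k, by omega⟩ : Fin m) :: z) :=
    hy.symm.trans hz
  rcases Nat.eq_zero_or_pos k with h0 | h0
  · subst h0
    refine ⟨z, ?_⟩
    exact hz
  · obtain ⟨k', rfl⟩ : ∃ k', k = k'+1 := ⟨k-1, by omega⟩
    have hyz' : Eqv (wDelta k' (by omega) ++ (wDes (k'+1) (by omega) ++ y))
        ((⟨k'+1, by omega⟩ : Fin m) :: z) := by
      simpa [wDelta, List.append_assoc] using hyz
    obtain ⟨z₁, hz₁⟩ := dvd_of_far_head (wDelta k' (by omega)) (fun w hw => by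
      have := mem_wDelta (by omega) hw
      unfold Far; right; simp; omega) hyz'
    have hseg : ((⟨k'+1, by omega⟩ : Fin m) : Fin m) :: z₁
        = wSegD (k'+1) 1 (by omega) ++ z₁ := by
      show _ = ((⟨k'+1+0, by omega⟩ : Fin m) :: []) ++ z₁
      simp
    rw [hseg] at hz₁
    obtain ⟨w, hw⟩ := chainDvd (k'+1) 1 (by omega) (by omega) hz₁
    rw [wSegD_zero (k'+1+1) (by omega)] at hw
    -- hw : y ≈ wDes (k'+2) ++ w
    refine ⟨w, ?_⟩
    refine hy.trans ?_
    refine (Eqv.append_left _ hw).trans ?_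
    have q : wDelta (k'+1) (by omega : k'+1 ≤ m) ++ (wDes (k'+2) hk ++ w)
        = wDelta (k'+2) hk ++ w := by
      simp [wDelta, List.append_assoc]
    rw [q]
    exact Eqv.rfl

/-- all atoms divide `x` implies `Δ_k` divides `x` -/
lemma delta_dvd_of_atoms {x : W m} (h : ∀ i : Fin m, Dvd [i] x) :
    ∀ (k : ℕ) (hk : k ≤ m), Dvd (wDelta k hk) x := by
  intro k
  induction k with
  | zero => intro hk; exact ⟨x, Eqv.rfl⟩
  | succ k ih => intro hk; exact delta_dvd_succ k hk (ih (by omega)) (h _)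


/-! ### central elements of the monoid -/

lemma neighbor {p : W m} {f : Fin m → Fin m} (hp : ∀ i, Eqv (i::p) (p ++ [f i]))
    {a b : Fin m} (hab : Adj a b) (ha : Dvd [a] p) : Dvd [b] p := by
  obtain ⟨q, hq⟩ := ha
  have hq' : Eqv p (a::q) := hq
  have h1 : Eqv (b::p) (a::(q ++ [f b])) :=
    (hp b).trans (hq'.append_right [f b])
  obtain ⟨w, hw1, _⟩ := (headE h1).2.2 hab.symm
  -- hw1 : p ≈ a::b::w
  have h2 : Eqv ((a : Fin m)::(a::b::w)) (a::((b::w) ++ [f a])) :=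
    ((hw1.cons a).symm.trans (hp a)).trans (hw1.append_right [f a])
  have h3 : Eqv ((a : Fin m)::(b::w)) (b::(w ++ [f a])) := cancel_head h2
  obtain ⟨t, ht1, _⟩ := (headE h3).2.2 hab
  have h4 : Eqv w (a::t) := cancel_head ht1
  exact ⟨a::b::t, hw1.trans (((h4.cons b).cons a).trans (braidE hab t))⟩

lemma all_atoms {p : W m} {f : Fin m → Fin m} (hp : ∀ i, Eqv (i::p) (p ++ [f i]))
    {a : Fin m} (ha : Dvd [a] p) : ∀ b : Fin m, Dvd [b] p := by
  have up : ∀ (d : ℕ) (b : Fin m), (b:ℕ) = (a:ℕ) + d → Dvd [b] p := by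
    intro d
    induction d with
    | zero =>
      intro b hb
      have : b = a := Fin.ext (by omega)
      subst this; exact ha
    | succ d ih =>
      intro b hb
      have hblt := b.isLt
      have h1 := ih ⟨(a:ℕ)+d, by omega⟩ rfl
      refine neighbor hp (a := ⟨(a:ℕ)+d, by omega⟩) ?_ h1
      exact Or.inl (by simp; omega)
  have down : ∀ (d : ℕ) (b : Fin m), (a:ℕ) = (b:ℕ) + d → Dvd [b] p := by
    intro d
    induction d with
    | zero =>
      intro b hb
      have : b = a := Fin.ext (by omega)
      subst this; exact ha
    | succ d ih =>
      intro b hb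
      have halt := a.isLt
      have h1 := ih ⟨(b:ℕ)+1, by omega⟩ (by simp; omega)
      refine neighbor hp (a := ⟨(b:ℕ)+1, by omega⟩) ?_ h1
      exact Or.inr (by simp)
  intro b
  rcases le_or_gt (a:ℕ) (b:ℕ) with h | h
  · exact up ((b:ℕ)-(a:ℕ)) b (by omega)
  · exact down ((a:ℕ)-(b:ℕ)) b (by omega)

/-- reversal permutation -/
def tauF (j : Fin m) : Fin m := ⟨m-1-(j:ℕ), by have := j.isLt; omega⟩

lemma tau_tau (j : Fin m) : tauF (tauF j) = j := by
  have := j.isLt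
  exact Fin.ext (by simp [tauF]; omega)

lemma lemC' (hm : 1 ≤ m) (i : Fin m) :
    Eqv (i :: wDelta m le_rfl) (wDelta m le_rfl ++ [tauF i]) := by
  have h := lemC (m := m) m le_rfl (i:ℕ) (m-1-(i:ℕ)) i.isLt (by have := i.isLt; omega)
  have e1 : (⟨(i:ℕ), by have := i.isLt; omega⟩ : Fin m) = i := Fin.ext rfl
  have e2 : (⟨m-1-(i:ℕ), by have := i.isLt; omega⟩ : Fin m) = tauF i := Fin.ext rfl
  rw [e1, e2] at h
  exact h

def wDeltaPow : ℕ → W m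
  | 0 => []
  | (s+1) => wDelta m le_rfl ++ wDeltaPow s

/-- a word commuting (up to letter-permutation) with all atoms is a power of `Δ` -/
lemma lemN : ∀ (N : ℕ) (p : W m) (_ : p.length ≤ N) (f : Fin m → Fin m)
    (_ : ∀ i, Eqv (i::p) (p ++ [f i])), ∃ s, Eqv p (wDeltaPow s) := by
  intro N
  induction N with
  | zero =>
    intro p hl f hp
    have : p = [] := List.length_eq_zero_iff.mp (by omega)
    subst this
    exact ⟨0, Eqv.rfl⟩
  | succ N ih =>
    intro p hl f hp
    cases p with
    | nil => exact ⟨0, Eqv.rfl⟩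
    | cons c t =>
      have hm : 1 ≤ m := by have := c.isLt; omega
      have hdvd : ∀ b : Fin m, Dvd [b] (c::t) := all_atoms hp ⟨t, Eqv.rfl⟩
      obtain ⟨p₁, hp₁⟩ := delta_dvd_of_atoms hdvd m le_rfl
      -- hp₁ : c::t ≈ Δ ++ p₁
      have twist : ∀ i : Fin m, Eqv ((tauF i)::p₁) (p₁ ++ [f i]) := by
        intro i
        have s1 : Eqv (wDelta m le_rfl ++ ((tauF i)::p₁)) ((i :: wDelta m le_rfl) ++ p₁) := by
          have := (lemC' hm i).symm.append_right p₁
          simpa [List.append_assoc] using this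
        have s2 : Eqv ((i :: wDelta m le_rfl) ++ p₁) (wDelta m le_rfl ++ (p₁ ++ [f i])) := by
          have c1 : Eqv (i :: (wDelta m le_rfl ++ p₁)) (i :: (c::t)) := hp₁.symm.cons i
          have c2 := hp i
          have c3 := hp₁.append_right [f i]
          have := (c1.trans c2).trans c3
          simpa [List.append_assoc] using this
        exact cancel_left _ (s1.trans s2)
      have twist' : ∀ j : Fin m, Eqv (j::p₁) (p₁ ++ [(f ∘ tauF) j]) := by
        intro j
        have := twist (tauF j)
        rwa [tau_tau] at this
      have hlen : p₁.length ≤ N := by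
        have e := hp₁.len
        have hd := wDelta_length_pos hm (le_refl m)
        simp only [List.length_cons, List.length_append] at e hl ⊢
        omega
      obtain ⟨s, hs⟩ := ih p₁ hlen (f ∘ tauF) twist'
      exact ⟨s+1, hp₁.trans (Eqv.append_left _ hs)⟩


/-! ### commutation of even powers of Delta -/

lemma wDeltaPow_add : ∀ (a b : ℕ), wDeltaPow (m := m) (a+b) = wDeltaPow a ++ wDeltaPow b := by
  intro a
  induction a with
  | zero => intro b; rw [Nat.zero_add]; rfl
  | succ a ih =>
    intro b
    rw [show (a+1)+b = (a+b)+1 by omega]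
    show wDelta m le_rfl ++ wDeltaPow (a+b) = (wDelta m le_rfl ++ wDeltaPow a) ++ wDeltaPow b
    rw [ih, List.append_assoc]

lemma delta2_comm_letter (i : Fin m) :
    Eqv (i :: wDeltaPow 2) (wDeltaPow 2 ++ [i]) := by
  have hm : 1 ≤ m := by have := i.isLt; omega
  have e : wDeltaPow (m:=m) 2 = wDelta m le_rfl ++ wDelta m le_rfl := by
    show wDelta m le_rfl ++ (wDelta m le_rfl ++ []) = _
    simp
  rw [e]
  have h1 := (lemC' hm i).append_right (wDelta m le_rfl)
  refine h1.trans ?_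
  have l2 : Eqv ((tauF i) :: wDelta m le_rfl) (wDelta m le_rfl ++ [i]) := by
    have := lemC' hm (tauF i)
    rwa [tau_tau] at this
  have h2 := Eqv.append_left (wDelta m le_rfl) l2
  have q1 : (wDelta m le_rfl ++ [tauF i]) ++ wDelta m le_rfl
      = wDelta m (le_rfl) ++ ((tauF i) :: wDelta m le_rfl) := by
    simp [List.append_assoc]
  have q2 : wDelta m le_rfl ++ (wDelta m le_rfl ++ [i])
      = (wDelta m le_rfl ++ wDelta m le_rfl) ++ [i] := by
    simp [List.append_assoc]
  rw [q1, ← q2]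
  exact h2

lemma delta2_comm_word : ∀ (u : W m), Eqv (u ++ wDeltaPow 2) (wDeltaPow 2 ++ u) := by
  intro u
  induction u with
  | nil =>
    rw [List.nil_append, List.append_nil]
    exact Eqv.rfl
  | cons c u ih =>
    show Eqv (c :: (u ++ wDeltaPow 2)) _
    refine (ih.cons c).trans ?_
    have h1 := (delta2_comm_letter c).append_right u
    have q1 : (c :: wDeltaPow (m:=m) 2) ++ u = c :: (wDeltaPow 2 ++ u) := by simp
    have q2 : (wDeltaPow (m:=m) 2 ++ [c]) ++ u = wDeltaPow 2 ++ (c :: u) := by simp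
    rw [q1, q2] at h1
    exact h1

lemma deltaPow_even_comm : ∀ (k : ℕ) (u : W m),
    Eqv (u ++ wDeltaPow (2*k)) (wDeltaPow (2*k) ++ u) := by
  intro k
  induction k with
  | zero =>
    intro u
    show Eqv (u ++ []) ([] ++ u)
    rw [List.nil_append, List.append_nil]
    exact Eqv.rfl
  | succ k ih =>
    intro u
    rw [show 2*(k+1) = 2*k + 2 by omega, wDeltaPow_add]
    have h1 : Eqv ((u ++ wDeltaPow (2*k)) ++ wDeltaPow 2)
        ((wDeltaPow (2*k) ++ u) ++ wDeltaPow 2) := (ih u).append_right _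
    have h2 : Eqv (wDeltaPow (2*k) ++ (u ++ wDeltaPow 2))
        (wDeltaPow (2*k) ++ (wDeltaPow 2 ++ u)) := Eqv.append_left _ (delta2_comm_word u)
    have q1 : (u ++ wDeltaPow (m:=m) (2*k)) ++ wDeltaPow 2
        = u ++ (wDeltaPow (2*k) ++ wDeltaPow 2) := by simp [List.append_assoc]
    have q2 : (wDeltaPow (m:=m) (2*k) ++ u) ++ wDeltaPow 2
        = wDeltaPow (2*k) ++ (u ++ wDeltaPow 2) := by simp [List.append_assoc]
    have q3 : wDeltaPow (m:=m) (2*k) ++ (wDeltaPow 2 ++ u)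
        = (wDeltaPow (2*k) ++ wDeltaPow 2) ++ u := by simp [List.append_assoc]
    rw [q1, q2] at h1
    rw [q3] at h2
    exact h1.trans h2

lemma cancel_right_pow {k : ℕ} {u v : W m}
    (h : Eqv (u ++ wDeltaPow (2*k)) (v ++ wDeltaPow (2*k))) : Eqv u v := by
  have h1 := ((deltaPow_even_comm k u).symm.trans h).trans (deltaPow_even_comm k v)
  exact cancel_left _ h1

/-! ### the group of fractions -/

def xrel (m : ℕ) (p q : W m × ℕ) : Prop :=
  Eqv (p.1 ++ wDeltaPow (2*q.2)) (q.1 ++ wDeltaPow (2*p.2))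

lemma xrel_refl (p : W m × ℕ) : xrel m p p := Eqv.rfl

lemma xrel_symm {p q : W m × ℕ} (h : xrel m p q) : xrel m q p := h.symm

lemma xrel_trans {p q r : W m × ℕ} (h1 : xrel m p q) (h2 : xrel m q r) : xrel m p r := by
  unfold xrel at *
  have a1 := h1.append_right (wDeltaPow (2*r.2))
  have a2 := h2.append_right (wDeltaPow (2*p.2))
  have q1 : (q.1 ++ wDeltaPow (2*p.2)) ++ wDeltaPow (2*r.2)
      = (q.1 ++ wDeltaPow (2*r.2)) ++ wDeltaPow (2*p.2) := by
    rw [List.append_assoc, List.append_assoc, ← wDeltaPow_add, ← wDeltaPow_add,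
      Nat.add_comm]
  rw [q1] at a1
  have a3 := a1.trans a2
  have q2 : (p.1 ++ wDeltaPow (2*q.2)) ++ wDeltaPow (2*r.2)
      = (p.1 ++ wDeltaPow (2*r.2)) ++ wDeltaPow (2*q.2) := by
    rw [List.append_assoc, List.append_assoc, ← wDeltaPow_add, ← wDeltaPow_add, Nat.add_comm]
  have q3 : (r.1 ++ wDeltaPow (2*q.2)) ++ wDeltaPow (2*p.2)
      = (r.1 ++ wDeltaPow (2*p.2)) ++ wDeltaPow (2*q.2) := by
    rw [List.append_assoc, List.append_assoc, ← wDeltaPow_add, ← wDeltaPow_add, Nat.add_comm]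
  rw [q2, q3] at a3
  exact cancel_right_pow a3

instance xSetoid (m : ℕ) : Setoid (W m × ℕ) :=
  ⟨xrel m, ⟨xrel_refl, xrel_symm, xrel_trans⟩⟩

def XG (m : ℕ) := Quotient (xSetoid m)

def xmk (m : ℕ) (p : W m × ℕ) : XG m := Quotient.mk (xSetoid m) p

lemma wDeltaPow_zero : wDeltaPow (m:=m) 0 = [] := rfl

lemma xmk_sound {p q : W m × ℕ} (h : xrel m p q) : xmk m p = xmk m q := Quotient.sound h

lemma xmk_exact {p q : W m × ℕ} (h : xmk m p = xmk m q) : xrel m p q := Quotient.exact h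

lemma xmul_wd : ∀ (p q p' q' : W m × ℕ), xrel m p p' → xrel m q q' →
    xrel m (p.1 ++ q.1, p.2 + q.2) (p'.1 ++ q'.1, p'.2 + q'.2) := by
  rintro ⟨p1, k⟩ ⟨q1, l⟩ ⟨p1', k'⟩ ⟨q1', l'⟩ h1 h2
  unfold xrel at *
  simp only at h1 h2 ⊢
  have key : ∀ (a b : W m) (s t : ℕ),
      Eqv ((a ++ b) ++ wDeltaPow (2*(s+t))) ((a ++ wDeltaPow (2*s)) ++ (b ++ wDeltaPow (2*t))) := by
    intro a b s t
    have q : (a ++ b) ++ wDeltaPow (m:=m) (2*(s+t))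
        = a ++ (b ++ (wDeltaPow (2*s) ++ wDeltaPow (2*t))) := by
      rw [show 2*(s+t) = 2*s + 2*t by omega, wDeltaPow_add]
      simp [List.append_assoc]
    rw [q]
    have h3 : Eqv (b ++ wDeltaPow (2*s)) (wDeltaPow (2*s) ++ b) := deltaPow_even_comm s b
    have h4 := Eqv.append_left a ((h3.symm).append_right (wDeltaPow (2*t)))
    have q2 : a ++ ((wDeltaPow (m:=m) (2*s) ++ b) ++ wDeltaPow (2*t))
        = a ++ (wDeltaPow (2*s) ++ (b ++ wDeltaPow (2*t))) := by simp [List.append_assoc]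
    have q3 : a ++ ((b ++ wDeltaPow (m:=m) (2*s)) ++ wDeltaPow (2*t))
        = a ++ (b ++ (wDeltaPow (2*s) ++ wDeltaPow (2*t))) := by simp [List.append_assoc]
    have q4 : a ++ (wDeltaPow (m:=m) (2*s) ++ (b ++ wDeltaPow (2*t)))
        = (a ++ wDeltaPow (2*s)) ++ (b ++ wDeltaPow (2*t)) := by simp [List.append_assoc]
    rw [q2, q3] at h4
    rw [← q4]
    exact h4.symm
  refine (key p1 q1 k' l').trans ?_
  refine Eqv.trans (Eqv.append h1 h2) ?_
  exact (key p1' q1' k l).symm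

instance xmonoid (m : ℕ) : Monoid (XG m) where
  mul := Quotient.map₂ (fun p q => (p.1 ++ q.1, p.2 + q.2))
    (fun p p' hp q q' hq => xmul_wd p q p' q' hp hq)
  one := xmk m ([], 0)
  mul_assoc := by
    intro a b c
    induction a using Quotient.ind
    induction b using Quotient.ind
    induction c using Quotient.ind
    apply Quotient.sound
    rename_i p q r
    show xrel m ((p.1 ++ q.1) ++ r.1, (p.2 + q.2) + r.2) (p.1 ++ (q.1 ++ r.1), p.2 + (q.2 + r.2))
    rw [List.append_assoc, Nat.add_assoc]
    exact xrel_refl _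
  one_mul := by
    intro a
    induction a using Quotient.ind
    apply Quotient.sound
    rename_i p
    show xrel m ([] ++ p.1, 0 + p.2) p
    rw [List.nil_append, Nat.zero_add]
    exact xrel_refl _
  mul_one := by
    intro a
    induction a using Quotient.ind
    apply Quotient.sound
    rename_i p
    show xrel m (p.1 ++ [], p.2 + 0) p
    rw [List.append_nil, Nat.add_zero]
    exact xrel_refl _

lemma xmul_mk (p q : W m × ℕ) :
    (xmk m p) * (xmk m q) = xmk m (p.1 ++ q.1, p.2 + q.2) := rfl

lemma atom_complement (a : Fin m) :
    ∃ Xa : W m, Eqv (a::Xa) (wDeltaPow 2) ∧ Eqv (Xa ++ [a]) (wDeltaPow 2) := by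
  have hm : 1 ≤ m := by have := a.isLt; omega
  have hp : ∀ i : Fin m, Eqv (i :: wDelta m le_rfl) (wDelta m le_rfl ++ [tauF i]) :=
    fun i => lemC' hm i
  have hne : wDelta m le_rfl ≠ ([] : W m) := by
    intro hcon
    have := wDelta_length_pos hm (le_refl m)
    rw [hcon] at this
    simp at this
  obtain ⟨c, t, hct⟩ : ∃ c t, wDelta m le_rfl = c :: t := by
    cases h : wDelta m le_rfl with
    | nil => exact absurd h hne
    | cons c t => exact ⟨c, t, rfl⟩
  have hdvd : Dvd [a] (wDelta m le_rfl) := by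
    refine all_atoms hp (a := c) ?_ a
    exact ⟨t, by rw [hct]; exact Eqv.rfl⟩
  obtain ⟨w, hw⟩ := hdvd
  have h1 := hw.append_right (wDelta m le_rfl)
  have q1 : (([a] : W m) ++ w) ++ wDelta m le_rfl = a :: (w ++ wDelta m le_rfl) := by simp
  rw [q1] at h1
  have q2 : wDeltaPow (m:=m) 2 = wDelta m le_rfl ++ wDelta m le_rfl := by
    show wDelta m le_rfl ++ (wDelta m le_rfl ++ []) = _
    simp
  have hfirst : Eqv (a :: (w ++ wDelta m le_rfl)) (wDeltaPow 2) := by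
    rw [q2]; exact h1.symm
  refine ⟨w ++ wDelta m le_rfl, hfirst, ?_⟩
  have h2 : Eqv (a :: ((w ++ wDelta m le_rfl) ++ [a])) (a :: wDeltaPow 2) := by
    have h3 : Eqv ((a :: (w ++ wDelta m le_rfl)) ++ [a]) (wDeltaPow 2 ++ [a]) :=
      hfirst.append_right [a]
    exact (h3.trans (delta2_comm_letter a).symm)
  exact cancel_head h2

lemma x_exists_inv (x : XG m) : ∃ y : XG m, y * x = 1 ∧ x * y = 1 := by
  induction x using Quotient.ind
  rename_i p
  obtain ⟨p1, k⟩ := p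
  have hxmk : Quotient.mk (xSetoid m) ((p1, k) : W m × ℕ) = xmk m (p1, k) := rfl
  rw [hxmk]
  have main : ∀ (u : W m), ∃ y : XG m,
      y * (xmk m (u, 0)) = 1 ∧ (xmk m (u, 0)) * y = 1 := by
    intro u
    induction u with
    | nil =>
      refine ⟨xmk m ([], 0), ?_, ?_⟩ <;>
        (rw [xmul_mk]; rfl)
    | cons c u ihu =>
      obtain ⟨y, hy1, hy2⟩ := ihu
      obtain ⟨Xc, hXc1, hXc2⟩ := atom_complement c
      have hc1 : (xmk m ((Xc, 1) : W m × ℕ)) * (xmk m (([c], 0) : W m × ℕ)) = 1 := by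
        rw [xmul_mk]
        apply xmk_sound
        unfold xrel
        simp only [wDeltaPow_zero, List.append_nil, List.nil_append, Nat.zero_add,
          Nat.add_zero, Nat.mul_zero, Nat.mul_one]
        exact hXc2
      have hc2 : (xmk m (([c], 0) : W m × ℕ)) * (xmk m ((Xc, 1) : W m × ℕ)) = 1 := by
        rw [xmul_mk]
        apply xmk_sound
        unfold xrel
        simp only [wDeltaPow_zero, List.append_nil, List.nil_append, Nat.zero_add,
          Nat.add_zero, Nat.mul_zero, Nat.mul_one, List.cons_append, List.singleton_append]
        exact hXc1
      have e : (xmk m ((c::u, 0) : W m × ℕ))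
          = (xmk m (([c], 0) : W m × ℕ)) * (xmk m ((u, 0) : W m × ℕ)) := by
        rw [xmul_mk]
        rfl
      refine ⟨y * (xmk m ((Xc, 1) : W m × ℕ)), ?_, ?_⟩
      · rw [e]
        rw [show (y * (xmk m ((Xc, 1) : W m × ℕ)))
            * ((xmk m (([c], 0) : W m × ℕ)) * (xmk m ((u, 0) : W m × ℕ)))
          = y * (((xmk m ((Xc, 1) : W m × ℕ)) * (xmk m (([c], 0) : W m × ℕ)))
            * (xmk m ((u, 0) : W m × ℕ))) by group]
        rw [hc1, one_mul, hy1]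
      · rw [e]
        rw [show ((xmk m (([c], 0) : W m × ℕ)) * (xmk m ((u, 0) : W m × ℕ)))
            * (y * (xmk m ((Xc, 1) : W m × ℕ)))
          = (xmk m (([c], 0) : W m × ℕ)) * (((xmk m ((u, 0) : W m × ℕ)) * y)
            * (xmk m ((Xc, 1) : W m × ℕ))) by group]
        rw [hy2, one_mul, hc2]
  obtain ⟨y, hy1, hy2⟩ := main p1
  have hk1 : (xmk m ((wDeltaPow (2*k), 0) : W m × ℕ)) * (xmk m (([], k) : W m × ℕ)) = 1 := by
    rw [xmul_mk]
    apply xmk_sound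
    unfold xrel
    simp only [wDeltaPow_zero, List.append_nil, List.nil_append, Nat.zero_add,
      Nat.add_zero, Nat.mul_zero]
    exact Eqv.rfl
  have hk2 : (xmk m (([], k) : W m × ℕ)) * (xmk m ((wDeltaPow (2*k), 0) : W m × ℕ)) = 1 := by
    rw [xmul_mk]
    apply xmk_sound
    unfold xrel
    simp only [wDeltaPow_zero, List.append_nil, List.nil_append, Nat.zero_add,
      Nat.add_zero, Nat.mul_zero]
    exact Eqv.rfl
  have hsplit : (xmk m ((p1, k) : W m × ℕ))
      = (xmk m ((p1, 0) : W m × ℕ)) * (xmk m (([], k) : W m × ℕ)) := by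
    rw [xmul_mk]
    apply xmk_sound
    unfold xrel
    simp only [wDeltaPow_zero, List.append_nil, List.nil_append, Nat.zero_add,
      Nat.add_zero, Nat.mul_zero]
    exact Eqv.rfl
  refine ⟨(xmk m ((wDeltaPow (2*k), 0) : W m × ℕ)) * y, ?_, ?_⟩
  · rw [hsplit]
    rw [show (xmk m ((wDeltaPow (2*k), 0) : W m × ℕ)) * y
        * ((xmk m ((p1, 0) : W m × ℕ)) * (xmk m (([], k) : W m × ℕ)))
      = (xmk m ((wDeltaPow (2*k), 0) : W m × ℕ)) * (y * (xmk m ((p1, 0) : W m × ℕ)))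
        * (xmk m (([], k) : W m × ℕ)) by group]
    rw [hy1, mul_one, hk1]
  · rw [hsplit]
    rw [show (xmk m ((p1, 0) : W m × ℕ)) * (xmk m (([], k) : W m × ℕ))
        * ((xmk m ((wDeltaPow (2*k), 0) : W m × ℕ)) * y)
      = (xmk m ((p1, 0) : W m × ℕ)) * ((xmk m (([], k) : W m × ℕ))
        * (xmk m ((wDeltaPow (2*k), 0) : W m × ℕ))) * y by group]
    rw [hk2, mul_one, hy2]

noncomputable instance xgroup (m : ℕ) : Group (XG m) :=
  { xmonoid m with
    inv := fun x => Classical.choose (x_exists_inv x)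
    inv_mul_cancel := fun x => (Classical.choose_spec (x_exists_inv x)).1 }

end Braid12

/-! ### Part D : the braid group -/

/-!
STATEMENT 12: The center of the braid group `B_n` (`n ≥ 3`) is the infinite cyclic
group generated by `δ²`, where `δ = σ_1(σ_2σ_1)(σ_3σ_2σ_1)⋯(σ_{n-1}⋯σ_1)`.
-/

/-- The braid relations on `n` strands, as words in the free group on the `n-1`
Artin generators: `σᵢσⱼ = σⱼσᵢ` for `|i - j| ≥ 2` and `σᵢσᵢ₊₁σᵢ = σᵢ₊₁σᵢσᵢ₊₁`. -/
def braidRels (n : ℕ) : Set (FreeGroup (Fin (n - 1))) :=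
  {r | ∃ i j : Fin (n - 1), (j : ℕ) + 2 ≤ (i : ℕ) ∧
      r = FreeGroup.of i * FreeGroup.of j * (FreeGroup.of i)⁻¹ * (FreeGroup.of j)⁻¹} ∪
  {r | ∃ i j : Fin (n - 1), (j : ℕ) = (i : ℕ) + 1 ∧
      r = FreeGroup.of i * FreeGroup.of j * FreeGroup.of i *
        (FreeGroup.of j * FreeGroup.of i * FreeGroup.of j)⁻¹}

/-- The braid group on `n` strands, presented by the Artin generators and relations. -/
abbrev BraidGroup (n : ℕ) : Type := PresentedGroup (braidRels n)

/-- The Artin generator `σᵢ` (0-indexed). -/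
def braidGen (n : ℕ) (i : Fin (n - 1)) : BraidGroup n := PresentedGroup.of i

/-- `σᵢ` for a natural number index (equal to `1` when out of range). -/
def braidGen' (n : ℕ) (i : ℕ) : BraidGroup n :=
  if h : i < n - 1 then braidGen n ⟨i, h⟩ else 1

/-- The braid `δ = σ_1(σ_2σ_1)(σ_3σ_2σ_1)⋯(σ_{n-1}σ_{n-2}⋯σ_1)` (with 0-indexed
generators: the `a`-th block is `σ_a σ_{a-1} ⋯ σ_0`). -/
def braidDelta (n : ℕ) : BraidGroup n :=
  ((List.range (n - 1)).map
    (fun a => (((List.range (a + 1)).reverse).map (braidGen' n)).prod)).prod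


namespace Braid12

variable {n : ℕ}

lemma rel_one {r : FreeGroup (Fin (n-1))} (hr : r ∈ braidRels n) :
    PresentedGroup.mk (braidRels n) r = 1 := by
  apply (QuotientGroup.eq_one_iff _).mpr
  exact Subgroup.subset_normalClosure hr

lemma gen_far' {i j : Fin (n-1)} (h : (j:ℕ)+2 ≤ (i:ℕ)) :
    braidGen n i * braidGen n j = braidGen n j * braidGen n i := by
  have h1 := rel_one (n := n) (Or.inl ⟨i, j, h, rfl⟩)
  simp only [map_mul, map_inv] at h1
  have h2 : (PresentedGroup.mk (braidRels n)) (FreeGroup.of i) = braidGen n i := rfl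
  have h3 : (PresentedGroup.mk (braidRels n)) (FreeGroup.of j) = braidGen n j := rfl
  rw [h2, h3] at h1
  have h4 : braidGen n i * braidGen n j * (braidGen n i)⁻¹ = braidGen n j := by
    simpa using mul_eq_one_iff_eq_inv.mp h1
  nth_rewrite 2 [← h4]
  group

lemma gen_far {a b : Fin (n-1)} (h : Far a b) :
    braidGen n a * braidGen n b = braidGen n b * braidGen n a := by
  rcases h with h | h
  · exact (gen_far' h).symm
  · exact gen_far' h

lemma gen_braid {a b : Fin (n-1)} (h : (b:ℕ) = (a:ℕ)+1) :
    braidGen n a * braidGen n b * braidGen n a = braidGen n b * braidGen n a * braidGen n b := by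
  have h1 := rel_one (n := n) (Or.inr ⟨a, b, h, rfl⟩)
  simp only [map_mul, map_inv] at h1
  have h2 : (PresentedGroup.mk (braidRels n)) (FreeGroup.of a) = braidGen n a := rfl
  have h3 : (PresentedGroup.mk (braidRels n)) (FreeGroup.of b) = braidGen n b := rfl
  rw [h2, h3] at h1
  simpa using mul_eq_one_iff_eq_inv.mp h1

/-- product of the images of the letters of a word -/
def iw (n : ℕ) (w : W (n-1)) : BraidGroup n := (w.map (braidGen n)).prod

lemma iw_nil : iw n [] = 1 := rfl

lemma iw_cons (a : Fin (n-1)) (w : W (n-1)) : iw n (a::w) = braidGen n a * iw n w := by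
  simp [iw]

lemma iw_append (u v : W (n-1)) : iw n (u ++ v) = iw n u * iw n v := by
  simp [iw]

lemma iw_mid (x z y : W (n-1)) : iw n (x ++ (z ++ y)) = iw n x * iw n z * iw n y := by
  rw [iw_append, iw_append, mul_assoc]

lemma iw_step {u v : W (n-1)} (h : Step u v) : iw n u = iw n v := by
  cases h with
  | far x y a b hf =>
    have hz : iw n [a,b] = iw n [b,a] := by
      simp only [iw, List.map_cons, List.map_nil, List.prod_cons, List.prod_nil, mul_one]
      exact gen_far hf
    show iw n (x ++ ([a,b] ++ y)) = iw n (x ++ ([b,a] ++ y))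
    rw [iw_mid, iw_mid, hz]
  | braid x y a b hb =>
    have hz : iw n [a,b,a] = iw n [b,a,b] := by
      simp only [iw, List.map_cons, List.map_nil, List.prod_cons, List.prod_nil, mul_one,
        ← mul_assoc]
      exact gen_braid hb
    show iw n (x ++ ([a,b,a] ++ y)) = iw n (x ++ ([b,a,b] ++ y))
    rw [iw_mid, iw_mid, hz]
  | braid' x y a b hb =>
    have hz : iw n [b,a,b] = iw n [a,b,a] := by
      simp only [iw, List.map_cons, List.map_nil, List.prod_cons, List.prod_nil, mul_one,
        ← mul_assoc]
      exact (gen_braid hb).symm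
    show iw n (x ++ ([b,a,b] ++ y)) = iw n (x ++ ([a,b,a] ++ y))
    rw [iw_mid, iw_mid, hz]

lemma iw_eqv {u v : W (n-1)} (h : Eqv u v) : iw n u = iw n v := by
  induction h with
  | refl => rfl
  | tail _ h2 ih => exact ih.trans (iw_step h2)

/-- `braidDelta` is the image of the word `wDelta`. -/
lemma braidDelta_eq_iw : braidDelta n = iw n (wDelta (n-1) le_rfl) := by
  have block : ∀ (a : ℕ) (h : a+1 ≤ n-1),
      (((List.range (a+1)).reverse).map (braidGen' n)).prod = iw n (wDes (a+1) h) := by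
    intro a
    induction a with
    | zero =>
      intro h
      have e : ((List.range 1).reverse) = [(0:ℕ)] := by rw [List.range_succ]; rfl
      rw [e]
      simp only [List.map_cons, List.map_nil, List.prod_cons, List.prod_nil, mul_one]
      unfold braidGen'
      rw [dif_pos (show (0:ℕ) < n-1 by omega)]
      simp [iw, wDes]
    | succ a ih =>
      intro h
      rw [List.range_succ]
      simp only [List.reverse_append, List.reverse_cons, List.reverse_nil, List.nil_append,
        List.cons_append, List.map_cons, List.prod_cons]
      rw [ih (by omega)]
      show _ = iw n ((⟨a+1, h⟩ : Fin (n-1)) :: wDes (a+1) (by omega))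
      rw [iw_cons]
      congr 1
      unfold braidGen'
      rw [dif_pos (show a+1 < n-1 by omega)]
  have main : ∀ (k : ℕ) (h : k ≤ n-1),
      ((List.range k).map
        (fun a => (((List.range (a + 1)).reverse).map (braidGen' n)).prod)).prod
        = iw n (wDelta k h) := by
    intro k
    induction k with
    | zero => intro h; simp [wDelta, iw]
    | succ k ih =>
      intro h
      rw [List.range_succ]
      simp only [List.map_append, List.prod_append, List.map_cons, List.prod_cons,
        List.map_nil, List.prod_nil, mul_one]
      rw [ih (by omega), block k h]
      show _ = iw n (wDelta k (by omega) ++ wDes (k+1) h)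
      rw [iw_append]
  unfold braidDelta
  exact main (n-1) le_rfl

/-! ### the embedding -/

lemma braid_lift_rels {G : Type} [Group G] (f : Fin (n-1) → G)
    (hfar : ∀ i j : Fin (n-1), (j:ℕ)+2 ≤ (i:ℕ) → f i * f j = f j * f i)
    (hbr : ∀ i j : Fin (n-1), (j:ℕ) = (i:ℕ)+1 → f i * f j * f i = f j * f i * f j) :
    ∀ r ∈ braidRels n, FreeGroup.lift f r = 1 := by
  rintro r (⟨i, j, hij, rfl⟩ | ⟨i, j, hij, rfl⟩)
  · simp only [map_mul, map_inv, FreeGroup.lift_apply_of]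
    rw [hfar i j hij]
    group
  · simp only [map_mul, map_inv, FreeGroup.lift_apply_of]
    rw [hbr i j hij]
    group

noncomputable def phi (n : ℕ) : BraidGroup n →* XG (n-1) :=
  PresentedGroup.toGroup (f := fun i => xmk (n-1) ([i], 0))
    (braid_lift_rels _
      (fun i j hij => by
        rw [xmul_mk, xmul_mk]
        apply xmk_sound
        unfold xrel
        simp only [wDeltaPow_zero, List.append_nil, List.nil_append, Nat.zero_add,
          Nat.add_zero, Nat.mul_zero, List.singleton_append]
        exact swapE (Or.inr hij) [])
      (fun i j hij => by
        rw [xmul_mk, xmul_mk, xmul_mk, xmul_mk]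
        apply xmk_sound
        unfold xrel
        simp only [wDeltaPow_zero, List.append_nil, List.nil_append, Nat.zero_add,
          Nat.add_zero, Nat.mul_zero, List.singleton_append, List.cons_append]
        exact braidE (Or.inl hij) []))

lemma phi_gen (i : Fin (n-1)) : phi n (braidGen n i) = xmk (n-1) ([i], 0) :=
  PresentedGroup.toGroup.of _

lemma phi_iw : ∀ (w : W (n-1)), phi n (iw n w) = xmk (n-1) (w, 0) := by
  intro w
  induction w with
  | nil => exact map_one _
  | cons a w ih =>
    rw [iw_cons, map_mul, phi_gen, ih, xmul_mk]
    rfl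

lemma iw_inj {u v : W (n-1)} (h : iw n u = iw n v) : Eqv u v := by
  have h2 : phi n (iw n u) = phi n (iw n v) := by rw [h]
  rw [phi_iw, phi_iw] at h2
  have h3 := xmk_exact h2
  unfold xrel at h3
  simpa [wDeltaPow_zero] using h3

/-! ### exponent-sum homomorphism -/

def expHom (n : ℕ) : BraidGroup n →* Multiplicative ℤ :=
  PresentedGroup.toGroup (f := fun _ => Multiplicative.ofAdd (1:ℤ))
    (braid_lift_rels _ (fun _ _ _ => rfl) (fun _ _ _ => rfl))

lemma expHom_iw : ∀ (w : W (n-1)), expHom n (iw n w) = Multiplicative.ofAdd (w.length : ℤ) := by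
  intro w
  induction w with
  | nil =>
    simp only [List.length_nil, Nat.cast_zero]
    rw [show (iw n ([] : W (n-1))) = 1 from rfl, map_one]
    rfl
  | cons a w ih =>
    rw [iw_cons, map_mul, ih]
    have : expHom n (braidGen n a) = Multiplicative.ofAdd (1:ℤ) :=
      PresentedGroup.toGroup.of _
    rw [this]
    simp only [List.length_cons]
    rw [← ofAdd_add]
    congr 1
    omega

/-! ### permutation homomorphism -/

def permOf (n : ℕ) (i : Fin (n-1)) : Equiv.Perm (Fin n) :=
  Equiv.swap ⟨(i:ℕ), by have := i.isLt; omega⟩ ⟨(i:ℕ)+1, by have := i.isLt; omega⟩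

lemma swap_disjoint_comm {n : ℕ} (a b c d : Fin n) (h1 : a ≠ c) (h2 : a ≠ d)
    (h3 : b ≠ c) (h4 : b ≠ d) :
    Equiv.swap a b * Equiv.swap c d = Equiv.swap c d * Equiv.swap a b := by
  have hdisj : (Equiv.swap a b).Disjoint (Equiv.swap c d) := by
    intro x
    by_cases hx : x = a ∨ x = b
    · right
      rcases hx with rfl | rfl
      · exact Equiv.swap_apply_of_ne_of_ne h1 h2
      · exact Equiv.swap_apply_of_ne_of_ne h3 h4
    · left
      push_neg at hx
      exact Equiv.swap_apply_of_ne_of_ne hx.1 hx.2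
  exact hdisj.commute.eq

lemma permOf_far (i j : Fin (n-1)) (h : (j:ℕ)+2 ≤ (i:ℕ)) :
    permOf n i * permOf n j = permOf n j * permOf n i := by
  unfold permOf
  apply swap_disjoint_comm <;> (apply Fin.ne_of_val_ne; simp; omega)

lemma permOf_braid (i j : Fin (n-1)) (hij : (j:ℕ) = (i:ℕ)+1) :
    permOf n i * permOf n j * permOf n i = permOf n j * permOf n i * permOf n j := by
  have hin := i.isLt
  have hjn := j.isLt
  set u : Fin n := ⟨(i:ℕ), by omega⟩ with hu
  set v : Fin n := ⟨(i:ℕ)+1, by omega⟩ with hv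
  set w : Fin n := ⟨(i:ℕ)+2, by omega⟩ with hw
  have hpi : permOf n i = Equiv.swap u v := rfl
  have hpj : permOf n j = Equiv.swap v w := by
    unfold permOf
    congr 1
    · exact Fin.ext (by simp [hv, hij])
    · exact Fin.ext (by simp [hw, hij])
  rw [hpi, hpj]
  have huv : u ≠ v := Fin.ne_of_val_ne (by simp [hu, hv])
  have huw : u ≠ w := Fin.ne_of_val_ne (by simp [hu, hw])
  have hvw : v ≠ w := Fin.ne_of_val_ne (by simp [hv, hw])
  have hwv : w ≠ v := hvw.symm
  have hwu : w ≠ u := huw.symm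
  have h1 := Equiv.swap_mul_swap_mul_swap (x := w) (y := v) (z := u) hwv hwu
  have h2 := Equiv.swap_mul_swap_mul_swap (x := u) (y := v) (z := w) huv huw
  have e1 : Equiv.swap u v * Equiv.swap v w * Equiv.swap u v = Equiv.swap u w := by
    rw [Equiv.swap_comm u v, Equiv.swap_comm v w]
    exact h1
  rw [e1, h2, Equiv.swap_comm]

def permHom (n : ℕ) : BraidGroup n →* Equiv.Perm (Fin n) :=
  PresentedGroup.toGroup (f := permOf n)
    (braid_lift_rels _ (fun i j hij => permOf_far i j hij)
      (fun i j hij => permOf_braid i j hij))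

lemma gens_ne (hn : 3 ≤ n) :
    braidGen n (⟨0, by omega⟩ : Fin (n-1)) ≠ braidGen n (⟨n-2, by omega⟩ : Fin (n-1)) := by
  intro hcon
  have h1 : permHom n (braidGen n ⟨0, by omega⟩) = permHom n (braidGen n ⟨n-2, by omega⟩) := by
    rw [hcon]
  have e1 : permHom n (braidGen n ⟨0, by omega⟩) = permOf n ⟨0, by omega⟩ :=
    PresentedGroup.toGroup.of _
  have e2 : permHom n (braidGen n ⟨n-2, by omega⟩) = permOf n ⟨n-2, by omega⟩ :=
    PresentedGroup.toGroup.of _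
  rw [e1, e2] at h1
  have h2 := congrArg (fun (σ : Equiv.Perm (Fin n)) => σ ⟨0, by omega⟩) h1
  unfold permOf at h2
  simp only at h2
  rw [Equiv.swap_apply_left] at h2
  rw [Equiv.swap_apply_of_ne_of_ne (Fin.ne_of_val_ne (by simp; omega))
    (Fin.ne_of_val_ne (by simp))] at h2
  have := congrArg Fin.val h2
  simp at this


/-! ### Part E : the center theorem -/

lemma iw_deltaPow : ∀ (s : ℕ), iw n (wDeltaPow s) = braidDelta n ^ s := by
  intro s
  induction s with
  | zero => simp [wDeltaPow_zero, iw_nil]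
  | succ s ih =>
    show iw n (wDelta (n-1) le_rfl ++ wDeltaPow s) = _
    rw [iw_append, ih, ← braidDelta_eq_iw, pow_succ']

lemma delta_sq_eq : braidDelta n ^ 2 = iw n (wDeltaPow 2) := (iw_deltaPow 2).symm

lemma delta_sq_comm_gen (i : Fin (n-1)) :
    braidGen n i * braidDelta n ^ 2 = braidDelta n ^ 2 * braidGen n i := by
  have h := iw_eqv (delta2_comm_letter (m := n-1) i)
  rw [iw_cons, iw_append] at h
  have e : iw n [i] = braidGen n i := by simp [iw]
  rw [e] at h
  rw [delta_sq_eq]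
  exact h

lemma delta_sq_central : braidDelta n ^ 2 ∈ Subgroup.center (BraidGroup n) := by
  rw [Subgroup.mem_center_iff]
  intro g
  have hg : g ∈ Subgroup.centralizer {braidDelta n ^ 2} := by
    refine PresentedGroup.generated_by (braidRels n) _ (fun j => ?_) g
    rw [Subgroup.mem_centralizer_iff]
    intro h hh
    rw [Set.mem_singleton_iff] at hh
    subst hh
    exact (delta_sq_comm_gen j).symm
  have := Subgroup.mem_centralizer_iff.mp hg (braidDelta n ^ 2) (Set.mem_singleton _)
  exact this.symm

lemma zpow_delta_sq_comm (x : BraidGroup n) (k : ℤ) :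
    (braidDelta n ^ 2) ^ k * x = x * (braidDelta n ^ 2) ^ k := by
  have hmem : (braidDelta n ^ 2) ^ k ∈ Subgroup.center (BraidGroup n) :=
    Subgroup.zpow_mem _ delta_sq_central k
  exact (Subgroup.mem_center_iff.mp hmem x).symm

lemma gen_inv_decomp (c : Fin (n-1)) :
    ∃ q : W (n-1), (braidGen n c)⁻¹ = iw n q * (braidDelta n ^ 2)⁻¹ := by
  obtain ⟨Xc, hXc1, _⟩ := atom_complement (m := n-1) c
  refine ⟨Xc, ?_⟩
  have h := iw_eqv hXc1
  rw [iw_cons] at h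
  rw [← delta_sq_eq] at h
  -- h : braidGen n c * iw n Xc = braidDelta n ^ 2
  refine inv_eq_of_mul_eq_one_right ?_
  calc braidGen n c * (iw n Xc * (braidDelta n ^ 2)⁻¹)
      = (braidGen n c * iw n Xc) * (braidDelta n ^ 2)⁻¹ := by rw [← mul_assoc]
    _ = (braidDelta n ^ 2) * (braidDelta n ^ 2)⁻¹ := by rw [h]
    _ = 1 := by group

lemma iw_inv_decomp : ∀ (p : W (n-1)),
    ∃ q : W (n-1), (iw n p)⁻¹ = iw n q * (braidDelta n ^ 2) ^ (-(p.length:ℤ)) := by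
  intro p
  induction p with
  | nil => exact ⟨[], by simp [iw_nil]⟩
  | cons c p ih =>
    obtain ⟨q, hq⟩ := ih
    obtain ⟨Xc, hXc⟩ := gen_inv_decomp c
    refine ⟨q ++ Xc, ?_⟩
    rw [iw_cons, mul_inv_rev, hq, hXc, iw_append]
    set z := braidDelta n ^ 2
    have hc := zpow_delta_sq_comm (n := n) (iw n Xc) (-(p.length:ℤ))
    calc iw n q * z ^ (-(p.length:ℤ)) * (iw n Xc * z⁻¹)
        = iw n q * (z ^ (-(p.length:ℤ)) * iw n Xc) * z⁻¹ := by group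
      _ = iw n q * (iw n Xc * z ^ (-(p.length:ℤ))) * z⁻¹ := by rw [hc]
      _ = (iw n q * iw n Xc) * (z ^ (-(p.length:ℤ)) * z⁻¹) := by group
      _ = (iw n q * iw n Xc) * z ^ (-(((c::p).length:ℕ):ℤ)) := by
          congr 1
          rw [← zpow_neg_one, ← zpow_add]
          congr 1
          simp
          omega
      _ = _ := by rw [List.length_cons]

lemma decomp (g : BraidGroup n) :
    ∃ (p : W (n-1)) (k : ℤ), g = iw n p * (braidDelta n ^ 2) ^ k := by
  set z := braidDelta n ^ 2 with hz
  let H : Subgroup (BraidGroup n) := {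
    carrier := {g | ∃ (p : W (n-1)) (k : ℤ), g = iw n p * z ^ k}
    one_mem' := ⟨[], 0, by simp [iw_nil]⟩
    mul_mem' := by
      rintro a b ⟨p, k, rfl⟩ ⟨q, l, rfl⟩
      refine ⟨p ++ q, k + l, ?_⟩
      have hc := zpow_delta_sq_comm (n := n) (iw n q) k
      rw [← hz] at hc
      rw [iw_append, zpow_add]
      calc iw n p * z^k * (iw n q * z^l)
          = iw n p * (z^k * iw n q) * z^l := by group
        _ = iw n p * (iw n q * z^k) * z^l := by rw [hc]
        _ = iw n p * iw n q * (z^k * z^l) := by group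
    inv_mem' := by
      rintro a ⟨p, k, rfl⟩
      obtain ⟨q, hq⟩ := iw_inv_decomp p
      refine ⟨q, -(p.length:ℤ) - k, ?_⟩
      rw [mul_inv_rev, hq]
      have hc := zpow_delta_sq_comm (n := n) (iw n q) (-k)
      rw [← hz] at hc
      calc (z^k)⁻¹ * (iw n q * z ^ (-(p.length:ℤ)))
          = z^(-k) * iw n q * z ^ (-(p.length:ℤ)) := by rw [← zpow_neg]; group
        _ = iw n q * z^(-k) * z ^ (-(p.length:ℤ)) := by rw [hc]
        _ = iw n q * z ^ (-(p.length:ℤ) - k) := by rw [mul_assoc, ← zpow_add]; congr 2; omega }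
  have : g ∈ H := by
    refine PresentedGroup.generated_by (braidRels n) H (fun j => ?_) g
    exact ⟨[j], 0, by simp [iw, braidGen]⟩
  exact this

lemma gen_delta (hn : 3 ≤ n) (i : Fin (n-1)) :
    braidGen n i * braidDelta n = braidDelta n * braidGen n (tauF i) := by
  have hm : 1 ≤ n-1 := by omega
  have h := iw_eqv (lemC' (m := n-1) hm i)
  rw [iw_cons, iw_append] at h
  have e : iw n [tauF i] = braidGen n (tauF i) := by simp [iw]
  rw [e] at h
  rw [braidDelta_eq_iw]
  exact h

theorem statement12' (hn : 3 ≤ n) :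
    Subgroup.center (BraidGroup n) = Subgroup.zpowers (braidDelta n ^ 2) ∧
    ∀ M : ℤ, (braidDelta n ^ 2) ^ M = 1 → M = 0 := by
  constructor
  · apply le_antisymm
    · -- center ≤ zpowers
      intro g hg
      obtain ⟨p, k, hgpk⟩ := decomp g
      have hpc : iw n p ∈ Subgroup.center (BraidGroup n) := by
        have h1 : iw n p = g * ((braidDelta n ^ 2) ^ k)⁻¹ := by
          rw [hgpk]; group
        rw [h1]
        exact Subgroup.mul_mem _ hg
          (Subgroup.inv_mem _ (Subgroup.zpow_mem _ delta_sq_central k))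
      have heqv : ∀ i : Fin (n-1), Eqv (i::p) (p ++ [i]) := by
        intro i
        apply iw_inj
        rw [iw_cons, iw_append]
        have e : iw n [i] = braidGen n i := by simp [iw]
        rw [e]
        exact Subgroup.mem_center_iff.mp hpc (braidGen n i)
      obtain ⟨s, hs⟩ := lemN p.length p le_rfl id (fun i => heqv i)
      have hps : iw n p = braidDelta n ^ s := by rw [iw_eqv hs, iw_deltaPow]
      set δ := braidDelta n with hδ
      have hgz : g = δ ^ ((s:ℤ) + 2*k) := by
        rw [hgpk, hps]
        rw [← zpow_natCast δ s, ← zpow_natCast δ 2, ← zpow_mul, ← zpow_add]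
        norm_num
      rcases Int.even_or_odd ((s:ℤ) + 2*k) with ⟨t, ht⟩ | ⟨t, ht⟩
      · refine ⟨t, ?_⟩
        show (δ ^ 2) ^ t = g
        rw [hgz, ht, ← zpow_natCast δ 2, ← zpow_mul]
        congr 1
        omega
      · exfalso
        -- δ itself would be central
        have hdc : δ ∈ Subgroup.center (BraidGroup n) := by
          have h1 : δ = g * ((δ ^ 2) ^ t)⁻¹ := by
            rw [hgz, ht, ← zpow_natCast δ 2, ← zpow_mul, ← zpow_neg, ← zpow_add]
            rw [show (2*t+1) + -(((2:ℕ):ℤ)*t) = 1 by push_cast; ring]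
            exact (zpow_one δ).symm
          rw [h1]
          exact Subgroup.mul_mem _ hg
            (Subgroup.inv_mem _ (Subgroup.zpow_mem _ delta_sq_central t))
        have h2 := Subgroup.mem_center_iff.mp hdc (braidGen n ⟨0, by omega⟩)
        have h3 := gen_delta hn ⟨0, by omega⟩
        rw [h2] at h3
        have h4 := mul_left_cancel h3
        have h5 : tauF (⟨0, by omega⟩ : Fin (n-1)) = (⟨n-2, by omega⟩ : Fin (n-1)) := by
          apply Fin.ext
          simp [tauF]
          omega
        rw [h5] at h4
        exact gens_ne hn h4
    · -- zpowers ≤ center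
      intro x hx
      obtain ⟨k, rfl⟩ := Subgroup.mem_zpowers_iff.mp hx
      exact Subgroup.zpow_mem _ delta_sq_central k
  · -- infinite order
    intro M hM
    have hL : 1 ≤ (wDelta (m := n-1) (n-1) le_rfl).length :=
      wDelta_length_pos (by omega) le_rfl
    have h1 := congrArg (expHom n) hM
    rw [map_one, map_zpow, map_pow] at h1
    rw [braidDelta_eq_iw, expHom_iw] at h1
    have h2 := congrArg Multiplicative.toAdd h1
    simp only [toAdd_zpow, toAdd_pow, toAdd_ofAdd, toAdd_one, smul_eq_mul] at h2
    set L := (wDelta (m := n-1) (n-1) le_rfl).length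
    have h3 : M * (2 * (L:ℤ)) = 0 := by
      rw [← h2]; ring
    rcases mul_eq_zero.mp h3 with h | h
    · exact h
    · exfalso; omega

end Braid12

theorem statement12 (n : ℕ) (hn : 3 ≤ n) :
    Subgroup.center (BraidGroup n) = Subgroup.zpowers (braidDelta n ^ 2) ∧
    ∀ m : ℤ, (braidDelta n ^ 2) ^ m = 1 → m = 0 := by
  exact Braid12.statement12' hn
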